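/- For natural numbers n, l, and 0 ≤ j ≤ n: Σ_{k=j}^{n} C(n+l,k) · C(n+l,k+l) · C(k,j) · (n!/(n−j)!) = C(n,j) · ((n+l)!/(n+l−j)!) · C(2n+2l−j, n−j). -/

import Mathlib

open Finset in
lemma stmt_15_core (n l j : ℕ) (hj : j ≤ n) :
    ∑ k ∈ Finset.Icc j n, (n + l).choose k * (n + l).choose (k + l) * k.choose j =
      (n + l).choose j * (2 * n + 2 * l - j).choose (n - j) := by
  have h1 : ∀ k ∈ Finset.Icc j n,
      (n + l).choose k * (n + l).choose (k + l) * k.choose j =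
      (n + l).choose j * ((n + l - j).choose (k - j) * (n + l).choose (k + l)) := by
    intro k hk
    rw [Finset.mem_Icc] at hk
    have : (n + l).choose k * k.choose j = (n + l).choose j * (n + l - j).choose (k - j) :=
      Nat.choose_mul hk.1
    calc (n + l).choose k * (n + l).choose (k + l) * k.choose j
        = (n + l).choose k * k.choose j * (n + l).choose (k + l) := by ring
      _ = _ := by rw [this]; ring
  rw [Finset.sum_congr rfl h1, ← Finset.mul_sum]
  congr 1
  have hre : ∑ k ∈ Finset.Icc j n, (n + l - j).choose (k - j) * (n + l).choose (k + l) =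
      ∑ m ∈ Finset.range (n - j + 1), (n + l - j).choose m * (n + l).choose (n - j - m) := by
    rw [← Finset.Ico_add_one_right_eq_Icc, Finset.sum_Ico_eq_sum_range, show n + 1 - j = n - j + 1 by omega]
    refine Finset.sum_congr rfl fun m hm => ?_
    rw [Finset.mem_range] at hm
    congr 1
    · congr 1; omega
    · rw [show j + m + l = (n+l) - (n - j - m) by omega]
      rw [Nat.choose_symm (by omega)]
  rw [hre, show 2*n+2*l-j = (n+l-j)+(n+l) by omega, Nat.add_choose_eq,
    Finset.Nat.sum_antidiagonal_eq_sum_range_succ_mk]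

open Finset in
theorem stmt_15 (n l j : ℕ) (hj : j ≤ n) :
    ∑ k ∈ Finset.Icc j n,
        (n + l).choose k * (n + l).choose (k + l) * k.choose j * n.descFactorial j =
      n.choose j * (n + l).descFactorial j * (2 * n + 2 * l - j).choose (n - j) := by
  have core := stmt_15_core n l j hj
  calc ∑ k ∈ Finset.Icc j n,
        (n + l).choose k * (n + l).choose (k + l) * k.choose j * n.descFactorial j
      = (∑ k ∈ Finset.Icc j n, (n + l).choose k * (n + l).choose (k + l) * k.choose j)
          * n.descFactorial j := by rw [Finset.sum_mul]
    _ = (n + l).choose j * (2 * n + 2 * l - j).choose (n - j) * n.descFactorial j := by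
          rw [core]
    _ = _ := by
          rw [Nat.descFactorial_eq_factorial_mul_choose, Nat.descFactorial_eq_factorial_mul_choose]
          ring
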